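/- Suppose 1 ≤ K ≤ N and all N·M similarity values s_{i,j} are pairwise distinct. Then for every label l ∈ 𝒴, the number of possible worlds whose K-NN prediction is l equals Σ_{i=1}^N Σ_{j=1}^M Σ_{γ ∈ Γ} 𝟙[l = pred(γ)] · Support(i,j,γ), where Γ is the set of all label-tally vectors γ : 𝒴 → ℕ with Σ_{l'} γ_{l'} = K, and pred(γ) denotes the label l' maximizing γ_{l'} (ties broken by the fixed linear order on 𝒴). (Correctness of the SS algorithm for the counting query Q2.) -/

import Mathlib

open Finset

/-- The top-`K` set of a possible world `w`: the set of indices `i` such that at most `K`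
indices `i'` have similarity `s i' (w i')` at least `s i (w i)`. Under the assumption that
all similarities are pairwise distinct, this is the set of the `K` indices with the largest
similarities. -/
noncomputable def topK {N M : ℕ} (s : Fin N → Fin M → ℝ) (K : ℕ) (w : Fin N → Fin M) :
    Finset (Fin N) :=
  Finset.univ.filter fun i =>
    (Finset.univ.filter fun i' => s i (w i) ≤ s i' (w i')).card ≤ K

/-- The boundary set `BSet(i, j; K)`: possible worlds `w` with `w i = j`, `i ∈ Top(K, w)`,
and `s i j` minimal among the similarities of the members of `Top(K, w)`. -/
noncomputable def BSet {N M : ℕ} (s : Fin N → Fin M → ℝ) (K : ℕ) (i : Fin N) (j : Fin M) :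
    Finset (Fin N → Fin M) :=
  Finset.univ.filter fun w =>
    w i = j ∧ i ∈ topK s K w ∧ ∀ i' ∈ topK s K w, s i j ≤ s i' (w i')

/-- The label tally of a possible world `w`: for each label `l`, the number of indices in
`Top(K, w)` with label `l`. -/
noncomputable def labelTally {N M : ℕ} {Y : Type*} [DecidableEq Y]
    (s : Fin N → Fin M → ℝ) (K : ℕ) (y : Fin N → Y) (w : Fin N → Fin M) : Y → ℕ :=
  fun l => ((topK s K w).filter fun n => y n = l).card

/-- `Support(i, j, γ)`: the number of possible worlds in `BSet(i,j;K)` whose label tally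
is exactly `γ`. -/
noncomputable def support {N M : ℕ} {Y : Type*} [Fintype Y] [DecidableEq Y]
    (s : Fin N → Fin M → ℝ) (K : ℕ) (y : Fin N → Y) (i : Fin N) (j : Fin M)
    (γ : Y → ℕ) : ℕ :=
  ((BSet s K i j).filter fun w => labelTally s K y w = γ).card

/-- `pred γ`: the label with the largest tally in `γ`, ties broken by the fixed linear
order on the label space (the least such label is chosen). -/
noncomputable def pred {Y : Type*} [Fintype Y] [LinearOrder Y] [Nonempty Y]
    (γ : Y → ℕ) : Y :=
  (Finset.univ.filter fun l => ∀ l', γ l' ≤ γ l).min' (by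
    obtain ⟨b, -, hb⟩ := Finset.exists_max_image (Finset.univ : Finset Y) γ
      ⟨Classical.arbitrary Y, Finset.mem_univ _⟩
    exact ⟨b, Finset.mem_filter.mpr ⟨Finset.mem_univ _, fun l' => hb l' (Finset.mem_univ _)⟩⟩)

/-- The K-NN prediction of a possible world `w`: the label maximizing the label tally of
`w`, ties broken by the fixed linear order on the label space. -/
noncomputable def knnPred {N M : ℕ} {Y : Type*} [Fintype Y] [LinearOrder Y] [Nonempty Y]
    (s : Fin N → Fin M → ℝ) (K : ℕ) (y : Fin N → Y) (w : Fin N → Fin M) : Y :=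
  pred (labelTally s K y w)

section Aux

variable {N M : ℕ}

/-- The rank of index `i` in world `w`: the number of indices with similarity at least
`s i (w i)`. -/
noncomputable def rnk (s : Fin N → Fin M → ℝ) (w : Fin N → Fin M) (i : Fin N) : ℕ :=
  (Finset.univ.filter fun i' => s i (w i) ≤ s i' (w i')).card

lemma topK_eq (s : Fin N → Fin M → ℝ) (K : ℕ) (w : Fin N → Fin M) :
    topK s K w = Finset.univ.filter fun i => rnk s w i ≤ K := rfl

variable {s : Fin N → Fin M → ℝ}
  (hs : Function.Injective fun p : Fin N × Fin M => s p.1 p.2)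

include hs

lemma sim_inj (w : Fin N → Fin M) {i i' : Fin N}
    (h : s i (w i) = s i' (w i')) : i = i' := by
  have : ((i, w i) : Fin N × Fin M) = (i', w i') :=
    hs (show (fun p : Fin N × Fin M => s p.1 p.2) (i, w i) =
      (fun p : Fin N × Fin M => s p.1 p.2) (i', w i') from h)
  exact congrArg Prod.fst this

omit hs in
lemma rnk_lt_rnk (w : Fin N → Fin M) {i j : Fin N} (h : s i (w i) < s j (w j)) :
    rnk s w j < rnk s w i := by
  apply Finset.card_lt_card
  rw [Finset.ssubset_iff_of_subset]
  · exact ⟨i, by simp, by simp [not_le.mpr h]⟩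
  · exact Finset.monotone_filter_right _ (fun x _ hx => le_trans h.le hx)

lemma rnk_inj (w : Fin N → Fin M) : Function.Injective (rnk s w) := by
  intro i j hij
  rcases lt_trichotomy (s i (w i)) (s j (w j)) with h | h | h
  · exact absurd hij (rnk_lt_rnk w h).ne'
  · exact sim_inj hs w h
  · exact absurd hij (rnk_lt_rnk w h).ne

lemma rnk_le_iff (w : Fin N → Fin M) {i j : Fin N} :
    rnk s w j ≤ rnk s w i ↔ s i (w i) ≤ s j (w j) := by
  constructor
  · intro h
    by_contra hc
    exact absurd h (not_le.mpr (rnk_lt_rnk w (not_le.mp hc)))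
  · intro h
    rcases h.lt_or_eq with h | h
    · exact (rnk_lt_rnk w h).le
    · rw [sim_inj hs w h]

lemma rnk_image (w : Fin N → Fin M) :
    Finset.univ.image (rnk s w) = Finset.Icc 1 N := by
  apply Finset.eq_of_subset_of_card_le
  · intro k hk
    simp only [Finset.mem_image, Finset.mem_univ, true_and] at hk
    obtain ⟨i, rfl⟩ := hk
    rw [Finset.mem_Icc]
    constructor
    · rw [Nat.one_le_iff_ne_zero, ← Nat.pos_iff_ne_zero, rnk, Finset.card_pos]
      exact ⟨i, by simp⟩
    · exact (Finset.card_filter_le _ _).trans (by simp)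
  · rw [Nat.card_Icc, Finset.card_image_of_injective _ (rnk_inj hs w)]
    simp

lemma exists_rnk_eq (w : Fin N → Fin M) {K : ℕ} (hK1 : 1 ≤ K) (hKN : K ≤ N) :
    ∃ i, rnk s w i = K := by
  have : K ∈ Finset.univ.image (rnk s w) := by
    rw [rnk_image hs w, Finset.mem_Icc]; exact ⟨hK1, hKN⟩
  simpa using this

lemma card_topK (w : Fin N → Fin M) {K : ℕ} (hKN : K ≤ N) :
    (topK s K w).card = K := by
  rw [topK_eq, ← Finset.card_image_of_injective _ (rnk_inj hs w),
    ← Finset.filter_image (p := fun k => k ≤ K), rnk_image hs w]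
  have : (Finset.Icc 1 N).filter (fun k => k ≤ K) = Finset.Icc 1 K := by
    ext k
    simp only [Finset.mem_filter, Finset.mem_Icc]
    omega
  rw [this, Nat.card_Icc]
  omega

lemma mem_BSet_iff (w : Fin N → Fin M) {K : ℕ} (hK1 : 1 ≤ K) (hKN : K ≤ N)
    (i : Fin N) (j : Fin M) :
    w ∈ BSet s K i j ↔ w i = j ∧ rnk s w i = K := by
  rw [BSet, Finset.mem_filter]
  simp only [Finset.mem_univ, true_and]
  obtain ⟨i0, hi0⟩ := exists_rnk_eq hs w hK1 hKN
  have hi0mem : i0 ∈ topK s K w := by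
    rw [topK_eq, Finset.mem_filter]; exact ⟨Finset.mem_univ _, hi0.le⟩
  constructor
  · rintro ⟨hwj, hitop, hmin⟩
    refine ⟨hwj, le_antisymm ?_ ?_⟩
    · rw [topK_eq, Finset.mem_filter] at hitop; exact hitop.2
    · have h1 : s i j ≤ s i0 (w i0) := hmin i0 hi0mem
      rw [← hwj] at h1
      rw [← hi0]
      exact (rnk_le_iff hs w).mpr h1
  · rintro ⟨hwj, hrK⟩
    have hitop : i ∈ topK s K w := by
      rw [topK_eq, Finset.mem_filter]; exact ⟨Finset.mem_univ _, hrK.le⟩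
    refine ⟨hwj, hitop, fun i' hi' => ?_⟩
    rw [topK_eq, Finset.mem_filter] at hi'
    rw [← hwj]
    exact (rnk_le_iff hs w).mp (hrK ▸ hi'.2)

end Aux

/-- **correctness of the SS algorithm for Q2.** If `1 ≤ K ≤ N` and all
similarities are pairwise distinct, then for every label `l`, the number of possible worlds
whose K-NN prediction is `l` equals
`Σ_i Σ_j Σ_{γ ∈ Γ} 𝟙[l = pred γ] · Support(i,j,γ)`, where `Γ` is the set of all
label-tally vectors summing to `K`. -/

theorem stmt5 (N M K : ℕ) (hK1 : 1 ≤ K) (hKN : K ≤ N)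
    {Y : Type*} [Fintype Y] [LinearOrder Y] [Nonempty Y] (y : Fin N → Y)
    (s : Fin N → Fin M → ℝ)
    (hs : Function.Injective fun p : Fin N × Fin M => s p.1 p.2)
    (l : Y) :
    (Finset.univ.filter fun w : Fin N → Fin M => knnPred s K y w = l).card =
      ∑ i : Fin N, ∑ j : Fin M,
        ∑ γ ∈ (Fintype.piFinset fun _ : Y => Finset.range (K + 1)).filter
            (fun γ : Y → ℕ => ∑ l' : Y, γ l' = K),
          if l = pred γ then support s K y i j γ else 0 := by
  classical
  set Γ : Finset (Y → ℕ) :=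
    (Fintype.piFinset fun _ : Y => Finset.range (K + 1)).filter
      (fun γ : Y → ℕ => ∑ l' : Y, γ l' = K) with hΓ
  -- for each world, its label tally lies in Γ
  have htally : ∀ w : Fin N → Fin M, labelTally s K y w ∈ Γ := by
    intro w
    have hcard : (topK s K w).card = K := card_topK hs w hKN
    have hsum : ∑ l' : Y, labelTally s K y w l' = K := by
      have h2 := Finset.card_eq_sum_card_fiberwise (s := topK s K w)
        (f := y) (t := (Finset.univ : Finset Y)) (fun x _ => Finset.mem_univ _)
      rw [hcard] at h2
      simpa [labelTally] using h2.symm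
    rw [hΓ, Finset.mem_filter]
    refine ⟨?_, hsum⟩
    rw [Fintype.mem_piFinset]
    intro l'
    rw [Finset.mem_range, Nat.lt_succ_iff]
    simp only [labelTally]
    exact (Finset.card_filter_le (topK s K w) (fun n => y n = l')).trans hcard.le
  -- the unique boundary index of a world
  have hexu : ∀ w : Fin N → Fin M, ∃ i, rnk s w i = K :=
    fun w => exists_rnk_eq hs w hK1 hKN
  set i0 : (Fin N → Fin M) → Fin N := fun w => (hexu w).choose with hi0def
  have hi0 : ∀ w, rnk s w (i0 w) = K := fun w => (hexu w).choose_spec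
  -- inner identity: the γ-sum equals the count of worlds in BSet with prediction l
  have hinner : ∀ (i : Fin N) (j : Fin M),
      ∑ γ ∈ Γ, (if l = pred γ then support s K y i j γ else 0) =
        ((BSet s K i j).filter fun w => knnPred s K y w = l).card := by
    intro i j
    rw [← Finset.sum_filter]
    rw [Finset.card_eq_sum_card_fiberwise (f := labelTally s K y)
      (t := Γ.filter fun γ => l = pred γ) (fun w hw => by
        rw [Finset.mem_coe, Finset.mem_filter] at hw ⊢
        exact ⟨htally w, hw.2.symm⟩)]
    apply Finset.sum_congr rfl
    intro γ hγ
    rw [Finset.mem_filter] at hγ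
    rw [support]
    congr 1
    ext w
    simp only [Finset.mem_filter]
    constructor
    · rintro ⟨hw, hγw⟩
      exact ⟨⟨hw, by rw [knnPred, hγw, ← hγ.2]⟩, hγw⟩
    · rintro ⟨⟨hw, _⟩, hγw⟩
      exact ⟨hw, hγw⟩
  -- outer identity: fiber over (i0 w, w (i0 w))
  have houter :
      (Finset.univ.filter fun w : Fin N → Fin M => knnPred s K y w = l).card =
        ∑ p : Fin N × Fin M,
          ((BSet s K p.1 p.2).filter fun w => knnPred s K y w = l).card := by
    rw [Finset.card_eq_sum_card_fiberwise
      (f := fun w => (i0 w, w (i0 w))) (t := Finset.univ)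
      (fun w _ => Finset.mem_univ _)]
    apply Finset.sum_congr rfl
    rintro ⟨i, j⟩ -
    congr 1
    ext w
    simp only [Finset.mem_filter, Finset.mem_univ, true_and, Prod.mk.injEq]
    rw [mem_BSet_iff hs w hK1 hKN]
    constructor
    · rintro ⟨hknn, rfl, rfl⟩
      exact ⟨⟨rfl, hi0 w⟩, hknn⟩
    · rintro ⟨⟨hwj, hrK⟩, hknn⟩
      have : i = i0 w := rnk_inj hs w (by rw [hrK, hi0 w])
      subst this
      exact ⟨hknn, rfl, hwj⟩
  rw [houter, Fintype.sum_prod_type]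
  exact Finset.sum_congr rfl fun i _ => Finset.sum_congr rfl fun j _ => (hinner i j).symm
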